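/- Let n ≥ 3 and P = ℚ[X₁,…,X_{2n}]. Let 𝔟⁻ be the ideal of P generated by all Xᵢ² (i = 1,…,2n) and all e_{n−1}(Xᵢ : i ∈ T) for subsets T ⊆ {2,…,2n} with |T| = n, where e_{n−1} is the elementary symmetric polynomial of degree n−1. Then for every subset J ⊆ {2,…,2n} with |J| = n−1, the monomial ∏_{j∈J} X_j lies in 𝔟⁻. -/

import Mathlib

open MvPolynomial Finset

noncomputable section

/-- e_j(Xᵢ : i ∈ I), the elementary symmetric polynomial in the variables indexed by I. -/
def esF {N : ℕ} (I : Finset (Fin N)) (j : ℕ) : MvPolynomial (Fin N) ℚ :=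
  ∑ J ∈ powersetCard j I, ∏ i ∈ J, X i

lemma powersetCard_erase_eq {N : ℕ} (S : Finset (Fin N)) (x : Fin N) (j : ℕ) :
    powersetCard j (S.erase x) = (powersetCard j S).filter (fun W => x ∉ W) := by
  ext W
  simp only [mem_powersetCard, mem_filter, subset_erase]
  tauto

/-- Averaging identity: summing `esF` over all `erase`s multiplies it by `|S| - j`. -/
lemma esF_erase_sum {N : ℕ} (S : Finset (Fin N)) (j : ℕ) :
    ∑ x ∈ S, esF (S.erase x) j = (S.card - j) • esF S j := by
  unfold esF
  have h1 : ∀ x ∈ S, (∑ W ∈ powersetCard j (S.erase x), ∏ i ∈ W, X i : MvPolynomial (Fin N) ℚ)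
      = ∑ W ∈ powersetCard j S, if x ∉ W then ∏ i ∈ W, X i else 0 := by
    intro x _
    rw [powersetCard_erase_eq, sum_filter]
  rw [sum_congr rfl h1, Finset.sum_comm, smul_sum]
  refine sum_congr rfl fun W hW => ?_
  obtain ⟨hWS, hWc⟩ := mem_powersetCard.1 hW
  rw [sum_ite, sum_const_zero, add_zero, sum_const]
  congr 1
  have : S.filter (fun x => x ∉ W) = S \ W := by ext y; simp
  rw [this, card_sdiff_of_subset hWS, hWc]

/-- All `esF S (n-1)` with `0 ∉ S` and `n ≤ |S|` lie in the ideal. -/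
lemma esF_mem (n : ℕ) (hn : 3 ≤ n)
    (b : Ideal (MvPolynomial (Fin (2 * n)) ℚ))
    (hb : b = Ideal.span
      ({f | ∃ i : Fin (2 * n), f = X i ^ 2} ∪
       {f | ∃ T : Finset (Fin (2 * n)), (⟨0, Nat.mul_pos two_pos (by omega)⟩ : Fin (2 * n)) ∉ T ∧ T.card = n ∧
          f = esF T (n - 1)})) :
    ∀ m : ℕ, ∀ S : Finset (Fin (2 * n)), (⟨0, Nat.mul_pos two_pos (by omega)⟩ : Fin (2 * n)) ∉ S → S.card = n + m →
      esF S (n - 1) ∈ b := by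
  intro m
  induction m with
  | zero =>
    intro S hz hc
    exact hb ▸ Ideal.subset_span (Or.inr ⟨S, hz, by omega, rfl⟩)
  | succ m ih =>
    intro S hz hc
    have key := esF_erase_sum S (n - 1)
    have hcard : S.card - (n - 1) = m + 2 := by omega
    rw [hcard] at key
    have hsum : ∑ x ∈ S, esF (S.erase x) (n - 1) ∈ b :=
      Ideal.sum_mem _ fun x hx =>
        ih (S.erase x) (fun h => hz (erase_subset _ _ h))
          (by rw [card_erase_of_mem hx]; omega)
    rw [key] at hsum
    have h2 : ((m + 2 : ℕ) : ℚ) ≠ 0 := by positivity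
    have heq : esF S (n - 1)
        = C (((m + 2 : ℕ) : ℚ))⁻¹ * ((m + 2 : ℕ) • esF S (n - 1)) := by
      rw [← Nat.cast_smul_eq_nsmul ℚ, smul_eq_C_mul, ← mul_assoc, ← C_mul,
        inv_mul_cancel₀ h2, C_1, one_mul]
    rw [heq]
    exact Ideal.mul_mem_left _ _ hsum

/-- Step in the proof of Theorem 6.1: in ℬ⁻ all square-free monomials of degree
n−1 in the variables X₂,…,X_{2n} vanish. -/
theorem stmt15 (n : ℕ) (hn : 3 ≤ n)
    (b : Ideal (MvPolynomial (Fin (2 * n)) ℚ))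
    (hb : b = Ideal.span
      ({f | ∃ i : Fin (2 * n), f = X i ^ 2} ∪
       {f | ∃ T : Finset (Fin (2 * n)), (⟨0, by omega⟩ : Fin (2 * n)) ∉ T ∧ T.card = n ∧
          f = esF T (n - 1)})) :
    ∀ J : Finset (Fin (2 * n)), (⟨0, by omega⟩ : Fin (2 * n)) ∉ J → J.card = n - 1 →
      (∏ j ∈ J, X j : MvPolynomial (Fin (2 * n)) ℚ) ∈ b := by
  intro J hzJ hJc
  set z : Fin (2 * n) := ⟨0, by omega⟩ with hzdef
  set U : Finset (Fin (2 * n)) := univ.erase z with hUdef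
  have hzU : z ∉ U := notMem_erase z univ
  have hUc : U.card = 2 * n - 1 := by
    rw [hUdef, card_erase_of_mem (mem_univ z), card_univ, Fintype.card_fin]
  have hJU : J ⊆ U := fun x hx => mem_erase.2 ⟨fun h => hzJ (h ▸ hx), mem_univ x⟩
  set A : Finset (Fin (2 * n)) := U \ J with hAdef
  have hAc : A.card = n := by
    rw [hAdef, card_sdiff_of_subset hJU, hUc, hJc]; omega
  -- the inclusion–exclusion identity
  have key : ∑ K ∈ A.powerset, ((-1 : ℚ) ^ K.card) • esF (U \ K) (n - 1) = 0 := by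
    have h1 : ∀ K ∈ A.powerset, ((-1 : ℚ) ^ K.card) • esF (U \ K) (n - 1)
        = ∑ S ∈ powersetCard (n - 1) U,
            if Disjoint S K then ((-1 : ℚ) ^ K.card) • ∏ i ∈ S, X i else 0 := by
      intro K _
      rw [esF, smul_sum, ← sum_filter]
      congr 1
      ext S
      simp only [mem_powersetCard, mem_filter, subset_sdiff]
      tauto
    rw [sum_congr rfl h1, Finset.sum_comm]
    refine sum_eq_zero fun S hS => ?_
    obtain ⟨hSU, hSc⟩ := mem_powersetCard.1 hS
    have h2 : A.powerset.filter (fun K => Disjoint S K) = (A \ S).powerset := by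
      ext K
      simp only [mem_filter, mem_powerset, subset_sdiff]
      exact ⟨fun ⟨h, hd⟩ => ⟨h, hd.symm⟩, fun ⟨h, hd⟩ => ⟨h, hd.symm⟩⟩
    rw [← sum_filter, h2, ← sum_smul]
    have hne : A \ S ≠ ∅ := by
      intro h
      have hsub : A ⊆ S := sdiff_eq_empty_iff_subset.1 h
      have := card_le_card hsub
      omega
    have hz : (∑ K ∈ (A \ S).powerset, (-1 : ℚ) ^ K.card) = 0 := by
      have h := Finset.sum_powerset_neg_one_pow_card (x := A \ S)
      rw [if_neg hne] at h
      exact_mod_cast h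
    rw [hz, zero_smul]
  -- split off the K = A term
  rw [← Finset.add_sum_erase _ _ (mem_powerset_self A)] at key
  have hUA : U \ A = J := Finset.sdiff_sdiff_eq_self hJU
  have hesJ : esF J (n - 1) = ∏ j ∈ J, X j := by
    rw [esF, ← hJc, powersetCard_self, sum_singleton]
  rw [hUA, hesJ] at key
  have ha : ((-1 : ℚ) ^ A.card) • (∏ j ∈ J, X j : MvPolynomial (Fin (2 * n)) ℚ)
      = -(∑ K ∈ A.powerset.erase A, ((-1 : ℚ) ^ K.card) • esF (U \ K) (n - 1)) :=
    eq_neg_of_add_eq_zero_left key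
  have h1 : ((-1 : ℚ) ^ A.card) * ((-1 : ℚ) ^ A.card) = 1 := by
    rw [← pow_add]
    exact Even.neg_one_pow ⟨A.card, rfl⟩
  have hmain : (∏ j ∈ J, X j : MvPolynomial (Fin (2 * n)) ℚ)
      = ((-1 : ℚ) ^ A.card) •
          (-(∑ K ∈ A.powerset.erase A, ((-1 : ℚ) ^ K.card) • esF (U \ K) (n - 1))) := by
    rw [← ha, smul_smul, h1, one_smul]
  rw [hmain, smul_eq_C_mul]
  refine Ideal.mul_mem_left _ _ (Submodule.neg_mem _ (Ideal.sum_mem _ fun K hK => ?_))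
  have hKA : K ⊆ A := mem_powerset.1 (mem_of_mem_erase hK)
  have hKne : K ≠ A := ne_of_mem_erase hK
  have hKc : K.card < n := by
    have := card_lt_card (Finset.ssubset_iff_subset_ne.2 ⟨hKA, hKne⟩)
    omega
  have hzUK : z ∉ U \ K := fun h => hzU (mem_sdiff.1 h).1
  have hUKc : (U \ K).card = 2 * n - 1 - K.card := by
    rw [card_sdiff_of_subset (hKA.trans sdiff_subset), hUc]
  rw [smul_eq_C_mul]
  exact Ideal.mul_mem_left _ _ <| esF_mem n hn b hb ((U \ K).card - n) (U \ K) hzUK (by omega)
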